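/- arXiv:2103.06154 — 4 statements merged into one kernel-verified Lean document; each statement's English description precedes it below -/
import Mathlib

section
/- For every integer m ≥ 1, let a_m denote the coefficient of X^m in the polynomial X · ∏_{k=1}^{m} (1 − X^{4k})² (1 − X^{8k})² ∈ ℤ[X] (the m-th Fourier coefficient of the eta product η(4z)²η(8z)²). Then a_m ≡ τ(m) (mod 2) for all m ≥ 1. -/
open Polynomial

/-- Ramanujan's tau function: `τ(n)` is the coefficient of `X^n` in
`X * ∏_{k=1}^{n} (1 - X^k)^24 ∈ ℤ[X]`. -/
noncomputable def ramanujanTau (n : ℕ) : ℤ :=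
  (X * ∏ k ∈ Finset.Icc 1 n, ((1 : ℤ[X]) - X ^ k) ^ 24).coeff n

lemma zmod2_sq_aux (j : ℕ) : ((1 : (ZMod 2)[X]) - X ^ j) ^ 2 = 1 - X ^ (2 * j) := by
  rw [sub_pow_char, one_pow, ← pow_mul, mul_comm]

lemma zmod2_factor_eq (k : ℕ) :
    ((1 : (ZMod 2)[X]) - X ^ (4 * k)) ^ 2 * ((1 : (ZMod 2)[X]) - X ^ (8 * k)) ^ 2 =
      ((1 : (ZMod 2)[X]) - X ^ k) ^ 24 := by
  have e8 : ((1 : (ZMod 2)[X]) - X ^ (4 * k)) ^ 2 = 1 - X ^ (8 * k) := by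
    rw [zmod2_sq_aux, show 2 * (4 * k) = 8 * k from by ring]
  have step : ((1 : (ZMod 2)[X]) - X ^ k) ^ 24 = (1 - X ^ (8 * k)) ^ 3 := by
    calc ((1 : (ZMod 2)[X]) - X ^ k) ^ 24 = ((1 - X ^ k) ^ 2) ^ 12 := by ring
      _ = (1 - X ^ (2 * k)) ^ 12 := by rw [zmod2_sq_aux]
      _ = ((1 - X ^ (2 * k)) ^ 2) ^ 6 := by ring
      _ = (1 - X ^ (4 * k)) ^ 6 := by rw [zmod2_sq_aux, show 2 * (2 * k) = 4 * k from by ring]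
      _ = ((1 - X ^ (4 * k)) ^ 2) ^ 3 := by ring
      _ = (1 - X ^ (8 * k)) ^ 3 := by rw [e8]
  rw [step, e8]; ring

theorem f32_coeff_congr_tau_mod_two (m : ℕ) (hm : 1 ≤ m) :
    (X * ∏ k ∈ Finset.Icc 1 m,
        ((1 : ℤ[X]) - X ^ (4 * k)) ^ 2 * ((1 : ℤ[X]) - X ^ (8 * k)) ^ 2).coeff m ≡
      ramanujanTau m [ZMOD 2] := by
  apply (ZMod.intCast_eq_intCast_iff _ _ 2).mp
  rw [ramanujanTau]
  have hc : ∀ p : ℤ[X], ((p.coeff m : ℤ) : ZMod 2)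
      = (p.map (Int.castRingHom (ZMod 2))).coeff m :=
    fun p => by simp [Polynomial.coeff_map]
  rw [hc, hc]
  refine congrArg (fun p : (ZMod 2)[X] => p.coeff m) ?_
  simp only [Polynomial.map_mul, Polynomial.map_prod, Polynomial.map_pow, Polynomial.map_sub,
    Polynomial.map_one, Polynomial.map_X]
  refine congrArg (fun q : (ZMod 2)[X] => X * q) ?_
  exact Finset.prod_congr rfl fun k _ => zmod2_factor_eq k
end

section
/- For every integer m ≥ 1, let a_m denote the coefficient of X^m in the polynomial X · ∏_{k=1}^{m} (1 − X^{3k})² (1 − X^{9k})² ∈ ℤ[X] (the m-th Fourier coefficient of the eta product η(3z)²η(9z)²). Then a_m ≡ τ(m) (mod 3) for all m ≥ 1. -/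
open Polynomial

theorem f27_coeff_congr_tau_mod_three (m : ℕ) (hm : 1 ≤ m) :
    (X * ∏ k ∈ Finset.Icc 1 m,
        ((1 : ℤ[X]) - X ^ (3 * k)) ^ 2 * ((1 : ℤ[X]) - X ^ (9 * k)) ^ 2).coeff m ≡
      ramanujanTau m [ZMOD 3] := by
  have h3 : ∀ j : ℕ, ((1 : (ZMod 3)[X]) - X ^ j) ^ 3 = 1 - X ^ (3 * j) := by
    intro j
    rw [sub_pow_char, one_pow, ← pow_mul, mul_comm]
  have key : ∀ k : ℕ, ((1 : (ZMod 3)[X]) - X ^ (3 * k)) ^ 2 * (1 - X ^ (9 * k)) ^ 2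
      = ((1 : (ZMod 3)[X]) - X ^ k) ^ 24 := by
    intro k
    have h9 : (9 : ℕ) * k = 3 * (3 * k) := by ring
    rw [h9, ← h3 (3 * k), ← h3 k, ← pow_mul, ← pow_mul, ← pow_mul, ← pow_add]
  rw [ramanujanTau]
  refine (ZMod.intCast_eq_intCast_iff _ _ 3).mp ?_
  have hmap : ∀ p : ℤ[X], ((p.coeff m : ℤ) : ZMod 3)
      = (p.map (Int.castRingHom (ZMod 3))).coeff m := by
    intro p; simp [Polynomial.coeff_map]
  rw [hmap, hmap]
  refine congrArg (fun p => Polynomial.coeff p m) ?_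
  simp only [Polynomial.map_mul, Polynomial.map_prod, Polynomial.map_pow,
    Polynomial.map_sub, Polynomial.map_one, Polynomial.map_X]
  refine congrArg _ (Finset.prod_congr rfl fun k _ => ?_)
  exact (key k).trans rfl
end

section
/- Let p be a prime, n ≥ 0 an integer, and let ω_n := (1 + X)^{p^n} − 1 ∈ ℤ_p[X]. Let H ∈ ℤ_p[X] be nonzero and set F := H · ω_n. Then λ(F) = λ(H) + p^n, where for a nonzero polynomial G ∈ ℤ_p[X], λ(G) denotes the least index i such that ‖G.coeff i‖ equals the maximum of the p-adic norms of the coefficients of G. -/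
open Polynomial

section Aux

variable {p : ℕ} [Fact p.Prime]

private lemma padic_sum_norm_le {α : Type*} (s : Finset α) (f : α → PadicInt p) {M : ℝ}
    (hM : 0 ≤ M) (h : ∀ a ∈ s, ‖f a‖ ≤ M) : ‖∑ a ∈ s, f a‖ ≤ M := by
  classical
  induction s using Finset.cons_induction with
  | empty => simpa using hM
  | cons a s ha ih =>
      rw [Finset.sum_cons]
      refine le_trans (PadicInt.nonarchimedean _ _) (max_le (h a (Finset.mem_cons_self a s)) ?_)
      exact ih fun b hb => h b (Finset.mem_cons_of_mem hb)

private lemma padic_sum_norm_lt {α : Type*} (s : Finset α) (f : α → PadicInt p) {M : ℝ}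
    (hM : 0 < M) (h : ∀ a ∈ s, ‖f a‖ < M) : ‖∑ a ∈ s, f a‖ < M := by
  classical
  induction s using Finset.cons_induction with
  | empty => simpa using hM
  | cons a s ha ih =>
      rw [Finset.sum_cons]
      refine lt_of_le_of_lt (PadicInt.nonarchimedean _ _)
        (max_lt (h a (Finset.mem_cons_self a s)) ?_)
      exact ih fun b hb => h b (Finset.mem_cons_of_mem hb)

private lemma bdd_coeff_norm (G : Polynomial (PadicInt p)) :
    BddAbove (Set.range fun j => ‖G.coeff j‖) := by
  refine ⟨1, ?_⟩
  rintro x ⟨j, rfl⟩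
  exact PadicInt.norm_le_one _

private lemma coeff_norm_le_sup (G : Polynomial (PadicInt p)) (i : ℕ) :
    ‖G.coeff i‖ ≤ ⨆ j, ‖G.coeff j‖ :=
  le_ciSup (bdd_coeff_norm G) i

private lemma exists_coeff_norm_eq_sup (G : Polynomial (PadicInt p)) :
    ∃ i, ‖G.coeff i‖ = ⨆ j, ‖G.coeff j‖ := by
  obtain ⟨i, hi, hmax⟩ := Finset.exists_max_image (Finset.range (G.natDegree + 1))
    (fun j => ‖G.coeff j‖) ⟨0, Finset.mem_range.mpr (Nat.succ_pos _)⟩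
  refine ⟨i, le_antisymm (coeff_norm_le_sup G i) (ciSup_le fun j => ?_)⟩
  by_cases hj : j ≤ G.natDegree
  · exact hmax j (Finset.mem_range.mpr (Nat.lt_succ_of_le hj))
  · rw [Polynomial.coeff_eq_zero_of_natDegree_lt (lt_of_not_ge hj), norm_zero]
    exact norm_nonneg _

end Aux

/-- The Iwasawa `λ`-invariant of a polynomial over `ℤ_p`: the least index `i` such that
the `p`-adic norm of the `i`-th coefficient equals the maximum of the `p`-adic norms of the
coefficients (equivalently, the least index whose coefficient has minimal `p`-adic valuation). -/
noncomputable def lambdaInvariant {p : ℕ} [Fact p.Prime] (G : Polynomial (PadicInt p)) : ℕ :=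
  sInf {i | ‖G.coeff i‖ = ⨆ j, ‖G.coeff j‖}

theorem lambda_invariant_mul_omega (p : ℕ) [Fact p.Prime] (n : ℕ)
    (H : Polynomial (PadicInt p)) (hH : H ≠ 0) :
    lambdaInvariant (H * (((1 : Polynomial (PadicInt p)) + X) ^ p ^ n - 1)) =
      lambdaInvariant H + p ^ n := by
  have hp : p.Prime := Fact.out
  set N := p ^ n with hN
  have hN0 : N ≠ 0 := pow_ne_zero _ hp.pos.ne'
  set ω : Polynomial (PadicInt p) := ((1 : Polynomial (PadicInt p)) + X) ^ N - 1 with hω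
  set M : ℝ := ⨆ j, ‖H.coeff j‖ with hM
  set l : ℕ := lambdaInvariant H with hl
  -- basic facts about λ(H)
  have hne : {i | ‖H.coeff i‖ = M} ≠ ∅ := by
    obtain ⟨i, hi⟩ := exists_coeff_norm_eq_sup H
    exact Set.nonempty_iff_ne_empty.mp ⟨i, hi⟩
  have hlmem : ‖H.coeff l‖ = M := Nat.sInf_mem (Set.nonempty_iff_ne_empty.mpr hne)
  have hMpos : 0 < M := by
    obtain ⟨i, hi⟩ := Polynomial.support_nonempty.mpr hH
    rw [Polynomial.mem_support_iff] at hi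
    exact lt_of_lt_of_le (norm_pos_iff.mpr hi) (coeff_norm_le_sup H i)
  have hlt : ∀ i < l, ‖H.coeff i‖ < M := by
    intro i hi
    refine lt_of_le_of_ne (coeff_norm_le_sup H i) fun h => ?_
    exact Nat.notMem_of_lt_sInf hi h
  have hleM : ∀ i, ‖H.coeff i‖ ≤ M := coeff_norm_le_sup H
  -- facts about ω
  have hω_coeff : ∀ j, ω.coeff j =
      ((N.choose j : PadicInt p) - if j = 0 then 1 else 0) := by
    intro j
    simp [hω, Polynomial.coeff_sub, Polynomial.coeff_one_add_X_pow, Polynomial.coeff_one,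
      eq_comm]
  have hωN : ω.coeff N = 1 := by
    rw [hω_coeff, if_neg hN0, Nat.choose_self]
    simp
  have hωsmall : ∀ j, j ≠ N → ‖ω.coeff j‖ ≤ (p : ℝ)⁻¹ := by
    intro j hj
    rcases eq_or_ne j 0 with rfl | hj0
    · rw [hω_coeff]
      simp [Nat.pos_of_ne_zero]
    · rw [hω_coeff, if_neg hj0, sub_zero]
      rcases lt_or_ge N j with h | h
      · rw [Nat.choose_eq_zero_of_lt h]
        simp
      · obtain ⟨c, hc⟩ := hp.dvd_choose_pow hj0 hj
        rw [hN] at *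
        rw [hc]
        push_cast
        rw [norm_mul, PadicInt.norm_p]
        calc (p : ℝ)⁻¹ * ‖(c : PadicInt p)‖ ≤ (p : ℝ)⁻¹ * 1 := by
              refine mul_le_mul_of_nonneg_left (PadicInt.norm_le_one _) ?_
              positivity
          _ = (p : ℝ)⁻¹ := mul_one _
  have hωle : ∀ j, ‖ω.coeff j‖ ≤ 1 := fun j => PadicInt.norm_le_one _
  have hpinv : (p : ℝ)⁻¹ < 1 := by
    rw [inv_lt_one_iff₀]
    right
    exact_mod_cast hp.one_lt
  -- every coefficient of F has norm ≤ M, and for a term with j ≠ N strictly less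
  have hterm_lt : ∀ i j : ℕ, j ≠ N → ‖H.coeff i * ω.coeff j‖ < M := by
    intro i j hj
    rw [norm_mul]
    calc ‖H.coeff i‖ * ‖ω.coeff j‖ ≤ M * (p : ℝ)⁻¹ :=
          mul_le_mul (hleM i) (hωsmall j hj) (norm_nonneg _) hMpos.le
      _ < M * 1 := by exact mul_lt_mul_of_pos_left hpinv hMpos
      _ = M := mul_one M
  have hFle : ∀ k, ‖(H * ω).coeff k‖ ≤ M := by
    intro k
    rw [Polynomial.coeff_mul]
    refine padic_sum_norm_le _ _ hMpos.le ?_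
    rintro ⟨i, j⟩ hij
    rw [norm_mul]
    calc ‖H.coeff i‖ * ‖ω.coeff j‖ ≤ M * 1 :=
          mul_le_mul (hleM i) (hωle j) (norm_nonneg _) hMpos.le
      _ = M := mul_one M
  -- the coefficient at l + N has norm exactly M
  have hkey : ‖(H * ω).coeff (l + N)‖ = M := by
    rw [Polynomial.coeff_mul]
    have hmem : ((l, N) : ℕ × ℕ) ∈ Finset.HasAntidiagonal.antidiagonal (l + N) := by
      simp
    rw [← Finset.add_sum_erase _ _ hmem]
    have hrest : ‖∑ x ∈ (Finset.HasAntidiagonal.antidiagonal (l + N)).erase (l, N),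
        H.coeff x.1 * ω.coeff x.2‖ < M := by
      refine padic_sum_norm_lt _ _ hMpos ?_
      rintro ⟨i, j⟩ hij
      obtain ⟨hne', hsum⟩ := Finset.mem_erase.mp hij
      rw [Finset.HasAntidiagonal.mem_antidiagonal] at hsum
      have hjN : j ≠ N := by
        intro h
        apply hne'
        subst h
        have : i = l := by omega
        subst this; rfl
      exact hterm_lt i j hjN
    have h1 : ‖H.coeff l * ω.coeff N‖ = M := by
      rw [hωN, mul_one, hlmem]
    rw [PadicInt.norm_add_eq_max_of_ne (by rw [h1]; exact (ne_of_gt hrest)), h1,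
      max_eq_left hrest.le]
  -- coefficients below l + N have norm < M
  have hbelow : ∀ k < l + N, ‖(H * ω).coeff k‖ < M := by
    intro k hk
    rw [Polynomial.coeff_mul]
    refine padic_sum_norm_lt _ _ hMpos ?_
    rintro ⟨i, j⟩ hij
    rw [Finset.HasAntidiagonal.mem_antidiagonal] at hij
    rcases eq_or_ne j N with rfl | hjN
    · have hi : i < l := by omega
      rw [norm_mul, hωN, norm_one, mul_one]
      exact hlt i hi
    · exact hterm_lt i j hjN
  -- the sup of the coefficient norms of F is M
  have hsupF : (⨆ j, ‖(H * ω).coeff j‖) = M :=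
    le_antisymm (ciSup_le hFle) (hkey ▸ coeff_norm_le_sup (H * ω) (l + N))
  -- conclude
  have hmemF : (l + N) ∈ {k | ‖(H * ω).coeff k‖ = ⨆ j, ‖(H * ω).coeff j‖} := by
    rw [Set.mem_setOf_eq, hsupF]
    exact hkey
  unfold lambdaInvariant
  refine le_antisymm (Nat.sInf_le hmemF) (le_of_not_gt fun hcon => ?_)
  have hmem' := Nat.sInf_mem (⟨l + N, hmemF⟩ :
    {k | ‖(H * ω).coeff k‖ = ⨆ j, ‖(H * ω).coeff j‖}.Nonempty)
  rw [Set.mem_setOf_eq] at hmem'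
  exact absurd (hmem'.trans hsupF) (ne_of_lt (hbelow _ hcon))
end

section
/- Let p be a prime and n ≥ 0 an integer. Let F ∈ ℤ_p[X] be a nonzero polynomial divisible by ω_n := (1 + X)^{p^n} − 1. Then λ(F) ≥ p^n; that is, for every index i < p^n, the p-adic norm ‖F.coeff i‖ is strictly smaller than the maximum of the p-adic norms of the coefficients of F. -/
open Polynomial Finset IsUltrametricDist

theorem lambda_invariant_ge_of_omega_dvd (p : ℕ) [Fact p.Prime] (n : ℕ)
    (F : Polynomial (PadicInt p)) (hF : F ≠ 0)
    (hdvd : (((1 : Polynomial (PadicInt p)) + X) ^ p ^ n - 1) ∣ F) :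
    p ^ n ≤ sInf {i | ‖F.coeff i‖ = ⨆ j, ‖F.coeff j‖} ∧
      ∀ i < p ^ n, ‖F.coeff i‖ < ⨆ j, ‖F.coeff j‖ := by
  have hp := (Fact.out : p.Prime)
  obtain ⟨G, rfl⟩ := hdvd
  set ω : Polynomial (PadicInt p) := (1 + X) ^ p ^ n - 1 with hω
  have hG : G ≠ 0 := by rintro rfl; simp at hF
  -- coefficients of ω
  have hωc : ∀ j, ω.coeff j
      = ((p ^ n).choose j : PadicInt p) - if j = 0 then 1 else 0 := by
    intro j
    simp [hω, coeff_sub, coeff_one_add_X_pow, coeff_one, eq_comm]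
  have hpn0 : p ^ n ≠ 0 := pow_ne_zero _ hp.pos.ne'
  have hωtop : ω.coeff (p ^ n) = 1 := by
    rw [hωc]
    simp [Nat.choose_self, hpn0, hp.ne_zero]
  have hωzero : ∀ j, p ^ n < j → ω.coeff j = 0 := by
    intro j hj
    have hj0 : j ≠ 0 := by
      intro h; rw [h] at hj; omega
    rw [hωc, Nat.choose_eq_zero_of_lt hj]
    simp [hj0]
  have hωsmall : ∀ j, j < p ^ n → ‖ω.coeff j‖ ≤ (p : ℝ)⁻¹ := by
    intro j hj
    rcases eq_or_ne j 0 with rfl | hj0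
    · rw [hωc]; simp [inv_nonneg, (by positivity : (0:ℝ) ≤ (p:ℝ))]
    · rw [hωc]
      simp only [hj0, if_neg, if_false, sub_zero]
      have hdvd : (p : ℤ) ∣ ((p ^ n).choose j : ℤ) := by
        exact_mod_cast Int.natCast_dvd_natCast.mpr
          (hp.dvd_choose_pow hj0 hj.ne)
      have := (PadicInt.norm_int_le_pow_iff_dvd
        (k := ((p ^ n).choose j : ℤ)) (n := 1)).mpr (by simpa using hdvd)
      calc ‖(((p ^ n).choose j : ℕ) : PadicInt p)‖
          = ‖((((p ^ n).choose j : ℤ)) : PadicInt p)‖ := by push_cast; ring_nf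
        _ ≤ (p : ℝ) ^ (-(1:ℕ) : ℤ) := this
        _ = (p : ℝ)⁻¹ := by simp
  -- sup of coefficients of G
  set d := G.natDegree with hd
  have hne : (Finset.range (d + 1)).Nonempty := ⟨0, by simp⟩
  set MG : ℝ := (Finset.range (d + 1)).sup' hne (fun k => ‖G.coeff k‖) with hMG
  have hMGle : ∀ k, ‖G.coeff k‖ ≤ MG := by
    intro k
    rcases le_or_gt k d with hk | hk
    · exact Finset.le_sup' (fun k => ‖G.coeff k‖) (Finset.mem_range.mpr (Nat.lt_succ_of_le hk))
    · rw [G.coeff_eq_zero_of_natDegree_lt hk, norm_zero]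
      exact le_trans (norm_nonneg (G.coeff 0))
        (Finset.le_sup' (fun k => ‖G.coeff k‖) (by simp : 0 ∈ Finset.range (d+1)))
  have hMGpos : 0 < MG := by
    have : G.coeff d ≠ 0 := by
      simpa [hd] using Polynomial.leadingCoeff_ne_zero.mpr hG
    exact lt_of_lt_of_le (norm_pos_iff.mpr this) (hMGle d)
  obtain ⟨k0, -, hk0⟩ := Finset.exists_mem_eq_sup' hne (fun k => ‖G.coeff k‖)
  have hfrac : (p : ℝ)⁻¹ * MG < MG := by
    have hp1 : (1 : ℝ) < (p : ℝ) := by exact_mod_cast hp.one_lt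
    have : (p : ℝ)⁻¹ < 1 := inv_lt_one_of_one_lt₀ hp1
    nlinarith
  have hfracnn : (0 : ℝ) ≤ (p : ℝ)⁻¹ * MG := by positivity
  -- bound on small coefficients of ω * G
  have hsmall : ∀ i, i < p ^ n → ‖(ω * G).coeff i‖ ≤ (p : ℝ)⁻¹ * MG := by
    intro i hi
    rw [coeff_mul]
    refine norm_sum_le_of_forall_le_of_nonneg hfracnn ?_
    intro x hx
    rw [Finset.HasAntidiagonal.mem_antidiagonal] at hx
    have hx1 : x.1 < p ^ n := lt_of_le_of_lt (hx ▸ Nat.le_add_right _ _) hi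
    calc ‖ω.coeff x.1 * G.coeff x.2‖ ≤ ‖ω.coeff x.1‖ * ‖G.coeff x.2‖ := norm_mul_le _ _
      _ ≤ (p : ℝ)⁻¹ * MG :=
        mul_le_mul (hωsmall _ hx1) (hMGle _) (norm_nonneg _) (by positivity)
  -- the coefficient at p ^ n + k0 realizes MG
  have hmem : ((p ^ n, k0) : ℕ × ℕ) ∈ Finset.HasAntidiagonal.antidiagonal (p ^ n + k0) := by
    simp
  have hbig : ‖(ω * G).coeff (p ^ n + k0)‖ = MG := by
    rw [coeff_mul, ← Finset.add_sum_erase _ _ hmem]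
    have hrest : ‖∑ x ∈ (Finset.HasAntidiagonal.antidiagonal (p ^ n + k0)).erase (p ^ n, k0),
        ω.coeff x.1 * G.coeff x.2‖ ≤ (p : ℝ)⁻¹ * MG := by
      refine norm_sum_le_of_forall_le_of_nonneg hfracnn ?_
      intro x hx
      rw [Finset.mem_erase, Finset.HasAntidiagonal.mem_antidiagonal] at hx
      rcases lt_trichotomy x.1 (p ^ n) with h1 | h1 | h1
      · calc ‖ω.coeff x.1 * G.coeff x.2‖ ≤ ‖ω.coeff x.1‖ * ‖G.coeff x.2‖ := norm_mul_le _ _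
          _ ≤ (p : ℝ)⁻¹ * MG :=
            mul_le_mul (hωsmall _ h1) (hMGle _) (norm_nonneg _) (by positivity)
      · exfalso
        apply hx.1
        have : x.2 = k0 := by omega
        exact Prod.ext h1 this
      · rw [hωzero _ h1, zero_mul, norm_zero]; exact hfracnn
    have hfirst : ‖ω.coeff (p ^ n) * G.coeff k0‖ = MG := by
      rw [hωtop, one_mul, ← hk0]
    have hneq : ‖ω.coeff (p ^ n) * G.coeff k0‖ ≠
        ‖∑ x ∈ (Finset.HasAntidiagonal.antidiagonal (p ^ n + k0)).erase (p ^ n, k0),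
          ω.coeff x.1 * G.coeff x.2‖ := by
      rw [hfirst]
      exact ne_of_gt (lt_of_le_of_lt hrest hfrac)
    rw [PadicInt.norm_add_eq_max_of_ne hneq, hfirst]
    exact max_eq_left (le_trans hrest (le_of_lt hfrac))
  -- upper bound for all coefficients
  have hub : ∀ j, ‖(ω * G).coeff j‖ ≤ MG := by
    intro j
    rw [coeff_mul]
    refine norm_sum_le_of_forall_le_of_nonneg (le_of_lt hMGpos) ?_
    intro x _
    calc ‖ω.coeff x.1 * G.coeff x.2‖ ≤ ‖ω.coeff x.1‖ * ‖G.coeff x.2‖ := norm_mul_le _ _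
      _ ≤ 1 * MG := mul_le_mul (PadicInt.norm_le_one _) (hMGle _) (norm_nonneg _) zero_le_one
      _ = MG := one_mul _
  have hbdd : BddAbove (Set.range fun j => ‖(ω * G).coeff j‖) :=
    ⟨MG, by rintro x ⟨j, rfl⟩; exact hub j⟩
  have hM : (⨆ j, ‖(ω * G).coeff j‖) = MG := by
    refine le_antisymm (ciSup_le hub) ?_
    rw [← hbig]
    exact le_ciSup hbdd (p ^ n + k0)
  have hlt : ∀ i, i < p ^ n → ‖(ω * G).coeff i‖ < ⨆ j, ‖(ω * G).coeff j‖ := by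
    intro i hi
    rw [hM]
    exact lt_of_le_of_lt (hsmall i hi) hfrac
  refine ⟨?_, hlt⟩
  refine le_csInf ⟨p ^ n + k0, ?_⟩ ?_
  · rw [Set.mem_setOf_eq, hbig, hM]
  · intro b hb
    rw [Set.mem_setOf_eq] at hb
    by_contra h
    exact absurd hb (ne_of_lt (hlt b (by omega)))
end
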